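/- With the rescaling λ → ελ, γ → ε²γ and position rescaled by ε, the rescaled lattice free energy converges: lim_{ε→0} ε^{-2} [ (2κ+ελ)(cosh(εα)−1) + sqrt(ε⁴γ² + ε²λ² sinh²(εα)) − ε²γ ] = κα² + sqrt(γ² + λ²α²) − γ. -/

import Mathlib

open Real Filter

lemma sinh_div_tendsto_aux (c : ℝ) :
    Filter.Tendsto (fun ε : ℝ => Real.sinh (ε*c)/ε) (nhdsWithin 0 (Set.Ioi 0)) (nhds c) := by
  have h : HasDerivAt (fun x : ℝ => Real.sinh (x*c)) c 0 := by
    have := (Real.hasDerivAt_sinh (0*c)).comp 0 ((hasDerivAt_id (0:ℝ)).mul_const c)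
    simpa [Function.comp_def] using this
  have h2 := hasDerivAt_iff_tendsto_slope.mp h
  have h3 : Filter.Tendsto (slope (fun x : ℝ => Real.sinh (x*c)) 0)
      (nhdsWithin 0 (Set.Ioi 0)) (nhds c) :=
    h2.mono_left (nhdsWithin_mono _ (fun x hx => ne_of_gt hx))
  refine h3.congr fun x => ?_
  simp [slope_def_field]

/-- Continuum limit of the lattice free energy: with `λ → ελ`, `γ → ε²γ` and position
rescaled by `ε`, `ε⁻² F_{ελ,κ,ε²γ}(εα) → κα² + sqrt(γ² + λ²α²) − γ` as `ε → 0⁺`. -/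
theorem free_energy_continuum_limit (κ lam γ α : ℝ) (hκ : 0 < κ) (hlam : 0 < lam)
    (hγ : 0 < γ) :
    Filter.Tendsto
      (fun ε : ℝ => ε⁻¹ * ε⁻¹ * ((2*κ + ε*lam) * (Real.cosh (ε*α) - 1)
        + Real.sqrt (ε^4 * γ^2 + ε^2 * lam^2 * (Real.sinh (ε*α))^2) - ε^2 * γ))
      (nhdsWithin 0 (Set.Ioi 0))
      (nhds (κ * α^2 + Real.sqrt (γ^2 + lam^2 * α^2) - γ)) := by
  have hs := sinh_div_tendsto_aux α
  have hs2 := sinh_div_tendsto_aux (α/2)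
  have hε0 : Filter.Tendsto (fun ε : ℝ => ε) (nhdsWithin 0 (Set.Ioi 0)) (nhds 0) :=
    tendsto_id.mono_left nhdsWithin_le_nhds
  have hA : Filter.Tendsto
      (fun ε : ℝ => (2*κ + ε*lam) * (2 * (Real.sinh (ε*(α/2))/ε)^2))
      (nhdsWithin 0 (Set.Ioi 0)) (nhds ((2*κ + 0*lam) * (2 * (α/2)^2))) :=
    (tendsto_const_nhds.add (hε0.mul_const lam)).mul ((hs2.pow 2).const_mul 2)
  have hB : Filter.Tendsto
      (fun ε : ℝ => Real.sqrt (γ^2 + lam^2 * (Real.sinh (ε*α)/ε)^2))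
      (nhdsWithin 0 (Set.Ioi 0)) (nhds (Real.sqrt (γ^2 + lam^2 * α^2))) := by
    refine (Real.continuous_sqrt.continuousAt.tendsto).comp ?_
    exact tendsto_const_nhds.add ((hs.pow 2).const_mul (lam^2))
  have hmain := (hA.add hB).sub_const γ
  have hlim : (2*κ + 0*lam) * (2 * (α/2)^2) + Real.sqrt (γ^2 + lam^2 * α^2) - γ
      = κ * α^2 + Real.sqrt (γ^2 + lam^2 * α^2) - γ := by ring
  rw [hlim] at hmain
  refine hmain.congr' ?_
  filter_upwards [self_mem_nhdsWithin] with ε hε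
  have hεpos : (0:ℝ) < ε := hε
  have hε' : ε ≠ 0 := ne_of_gt hεpos
  have hcosh : Real.cosh (ε*α) - 1 = 2 * Real.sinh (ε*(α/2))^2 := by
    have h2 : ε*α = 2*(ε*(α/2)) := by ring
    rw [h2, Real.cosh_two_mul, Real.cosh_sq]
    ring
  have hsqrt : Real.sqrt (ε^4 * γ^2 + ε^2 * lam^2 * (Real.sinh (ε*α))^2)
      = ε^2 * Real.sqrt (γ^2 + lam^2 * (Real.sinh (ε*α)/ε)^2) := by
    rw [show ε^4 * γ^2 + ε^2 * lam^2 * (Real.sinh (ε*α))^2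
        = (ε^2)^2 * (γ^2 + lam^2 * (Real.sinh (ε*α)/ε)^2) by field_simp,
      Real.sqrt_mul (sq_nonneg _), Real.sqrt_sq (sq_nonneg ε)]
  rw [hcosh, hsqrt]
  field_simp
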